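/- The classical Bell numbers B(n) = ∑_{k=0}^{n} S(n,k), where S(n,k) are Stirling numbers of the second kind, satisfy Spivey's identity: B(n+m) = ∑_{r=0}^{n} ∑_{j=0}^{m} C(n,r) · S(m,j) · B(r) · j^{n−r}, with the convention 0^0 = 1. -/

import Mathlib

open Finset

/-- Unsigned Stirling numbers of the first kind. -/
def stirC : ℕ → ℕ → ℕ
  | 0, 0 => 1
  | 0, _ + 1 => 0
  | n + 1, 0 => n * stirC n 0
  | n + 1, k + 1 => stirC n k + n * stirC n (k + 1)

/-- Stirling numbers of the second kind. -/
def stirS : ℕ → ℕ → ℕ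
  | 0, 0 => 1
  | 0, _ + 1 => 0
  | _ + 1, 0 => 0
  | n + 1, k + 1 => stirS n k + (k + 1) * stirS n (k + 1)

/-- The Bell numbers. -/
def Bell (n : ℕ) : ℕ := ∑ k ∈ Finset.range (n + 1), stirS n k

lemma stirS_eq_zero : ∀ {n k : ℕ}, n < k → stirS n k = 0
  | 0, _+1, _ => rfl
  | n+1, k+1, h => by
      have h1 : n < k := Nat.lt_of_succ_lt_succ h
      show stirS n k + (k+1) * stirS n (k+1) = 0
      rw [stirS_eq_zero h1, stirS_eq_zero (Nat.lt_succ_of_lt h1), Nat.mul_zero]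

lemma stirS_sum (n : ℕ) : ∀ k, stirS (n+1) (k+1) = ∑ j ∈ Finset.range (n+1), n.choose j * stirS j k := by
  induction n with
  | zero => intro k; simp [stirS]
  | succ n ih =>
    intro k
    have split : ∑ j ∈ Finset.range (n+2), (n+1).choose j * stirS j k
        = ∑ j ∈ Finset.range (n+1), n.choose j * stirS j k
          + ∑ j ∈ Finset.range (n+1), n.choose j * stirS (j+1) k := by
      rw [Finset.sum_range_succ' (fun j => (n+1).choose j * stirS j k)]
      have pasc : ∀ j, (n+1).choose (j+1) * stirS (j+1) k
          = n.choose j * stirS (j+1) k + n.choose (j+1) * stirS (j+1) k := by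
        intro j; rw [Nat.choose_succ_succ, Nat.add_mul]
      simp only [pasc, Finset.sum_add_distrib]
      have h2 : ∑ j ∈ Finset.range (n+1), n.choose (j+1) * stirS (j+1) k
            + (n+1).choose 0 * stirS 0 k
          = ∑ j ∈ Finset.range (n+1), n.choose j * stirS j k := by
        have : (n+1).choose 0 * stirS 0 k = n.choose 0 * stirS 0 k := by simp
        rw [this, ← Finset.sum_range_succ' (fun j => n.choose j * stirS j k)]
        rw [Finset.sum_range_succ]
        simp [Nat.choose_succ_self]
      omega
    rw [split]
    cases k with
    | zero =>
      have hz : ∀ j, stirS (j+1) 0 = 0 := fun j => rfl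
      simp only [hz, Nat.mul_zero, Finset.sum_const_zero, Nat.add_zero]
      rw [← ih 0]
      show stirS (n+1) 0 + 1 * stirS (n+1) 1 = stirS (n+1) 1
      cases n <;> simp [stirS]
    | succ k =>
      have hs : ∀ j, stirS (j+1) (k+1) = stirS j k + (k+1) * stirS j (k+1) := fun j => rfl
      simp only [hs, Nat.mul_add, Finset.sum_add_distrib]
      have e1 : ∑ j ∈ Finset.range (n+1), n.choose j * ((k+1) * stirS j (k+1))
          = (k+1) * ∑ j ∈ Finset.range (n+1), n.choose j * stirS j (k+1) := by
        rw [Finset.mul_sum]; congr 1; ext j; ring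
      rw [e1, ← ih k, ← ih (k+1)]
      show stirS (n+1) (k+1) + (k+1+1) * stirS (n+1) (k+1+1) = _
      ring

lemma bell_succ (n : ℕ) : Bell (n+1) = ∑ k ∈ Finset.range (n+1), n.choose k * Bell k := by
  have h1 : Bell (n+1) = ∑ k ∈ Finset.range (n+1), stirS (n+1) (k+1) := by
    unfold Bell
    rw [Finset.sum_range_succ' (fun k => stirS (n+1) k)]
    simp [show stirS (n+1) 0 = 0 from rfl]
  rw [h1]
  simp only [stirS_sum]
  rw [Finset.sum_comm]
  refine Finset.sum_congr rfl fun j hj => ?_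
  rw [← Finset.mul_sum]
  congr 1
  have hj' : j + 1 ≤ n + 1 := Finset.mem_range.mp hj
  unfold Bell
  rw [← Finset.sum_range_add_sum_Ico (fun k => stirS j k) hj']
  have : ∑ k ∈ Finset.Ico (j+1) (n+1), stirS j k = 0 := by
    apply Finset.sum_eq_zero
    intro k hk
    exact stirS_eq_zero (Finset.mem_Ico.mp hk).1
  omega
lemma trinom (n r s : ℕ) : n.choose r * (n - r).choose s = n.choose s * (n - s).choose r := by
  rcases le_or_gt (r + s) n with h | h
  · have h1 : r + s ≤ n := h
    have e1 := Nat.choose_mul (n := n) (k := r + s) (s := r) (Nat.le_add_right r s)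
    have e2 := Nat.choose_mul (n := n) (k := r + s) (s := s) (Nat.le_add_left s r)
    simp only [Nat.add_sub_cancel_left, Nat.add_sub_cancel] at e1 e2
    have e3 : (r + s).choose r = (r + s).choose s := by
      rw [← Nat.choose_symm (Nat.le_add_right r s), Nat.add_sub_cancel_left]
    rw [← e1, ← e2, e3]
  · rcases le_or_gt r n with hr | hr
    · rcases le_or_gt s n with hs | hs
      · rw [Nat.choose_eq_zero_of_lt (by omega : n - r < s),
            Nat.choose_eq_zero_of_lt (by omega : n - s < r)]
        simp
      · rw [Nat.choose_eq_zero_of_lt hs]; simp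
        rw [Nat.choose_eq_zero_of_lt (by omega : n - r < s)]; simp
    · rw [Nat.choose_eq_zero_of_lt hr]; simp
      rw [Nat.choose_eq_zero_of_lt (by omega : n - s < r)]; simp

lemma keyK (n x : ℕ) :
    ∑ r ∈ Finset.range (n+1), n.choose r * Bell r * (x+1)^(n-r)
  = ∑ r ∈ Finset.range (n+1), n.choose r * Bell (r+1) * x^(n-r) := by
  have hb : ∀ e, e ≤ n → (x+1)^e = ∑ s ∈ Finset.range (n+1), e.choose s * x^s := by
    intro e he
    rw [add_pow]
    simp only [one_pow, mul_one, Nat.cast_id]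
    rw [Finset.sum_subset (Finset.range_subset_range.mpr (by omega : e + 1 ≤ n + 1))
      (fun s _ hs => by
        rw [Nat.choose_eq_zero_of_lt (by simp at hs; omega), Nat.mul_zero])]
    exact Finset.sum_congr rfl fun s _ => Nat.mul_comm _ _
  have hB : ∀ r, r ≤ n → Bell (r+1) = ∑ k ∈ Finset.range (n+1), r.choose k * Bell k := by
    intro r hr
    rw [bell_succ]
    exact Finset.sum_subset (Finset.range_subset_range.mpr (by omega : r + 1 ≤ n + 1))
      (fun k _ hk => by
        rw [Nat.choose_eq_zero_of_lt (by simp at hk; omega), Nat.zero_mul])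
  have l1 : ∑ r ∈ Finset.range (n+1), n.choose r * Bell r * (x+1)^(n-r)
      = ∑ s ∈ Finset.range (n+1), ∑ r ∈ Finset.range (n+1),
          n.choose r * Bell r * ((n-r).choose s * x^s) := by
    rw [Finset.sum_comm]
    refine Finset.sum_congr rfl fun r hr => ?_
    rw [hb (n-r) (by omega), Finset.mul_sum]
  have r1 : ∑ r ∈ Finset.range (n+1), n.choose r * Bell (r+1) * x^(n-r)
      = ∑ r ∈ Finset.range (n+1), ∑ k ∈ Finset.range (n+1),
          n.choose (n-r) * ((n-r).choose k * Bell k) * x^(n-(n-r)) := by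
    rw [← Finset.sum_range_reflect (fun r => n.choose r * Bell (r+1) * x^(n-r)) (n+1)]
    refine Finset.sum_congr rfl fun r hr => ?_
    simp only [Nat.add_sub_cancel]
    rw [hB (n-r) (by omega), Finset.mul_sum, Finset.sum_mul]
  rw [l1, r1]
  refine Finset.sum_congr rfl fun s hs => Finset.sum_congr rfl fun r hr => ?_
  have hs' : s ≤ n := by simp at hs; omega
  have hr' : r ≤ n := by simp at hr; omega
  rw [Nat.choose_symm hs', Nat.sub_sub_self hs']
  have := trinom n r s
  calc n.choose r * Bell r * ((n - r).choose s * x ^ s)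
      = n.choose r * (n-r).choose s * Bell r * x ^ s := by ring
    _ = n.choose s * (n-s).choose r * Bell r * x ^ s := by rw [this]
    _ = n.choose s * ((n - s).choose r * Bell r) * x ^ s := by ring

lemma inner1 (m e : ℕ) : ∑ j ∈ Finset.range (m+2), stirS (m+1) j * j^e
    = (∑ j ∈ Finset.range (m+1), stirS m j * (j+1)^e)
      + ∑ j ∈ Finset.range (m+1), stirS m j * j^(e+1) := by
  rw [Finset.sum_range_succ' (fun j => stirS (m+1) j * j^e)]
  have h0 : stirS (m+1) 0 * 0^e = 0 := by
    rw [show stirS (m+1) 0 = 0 from rfl, Nat.zero_mul]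
  rw [h0, Nat.add_zero]
  have hterm : ∀ j, stirS (m+1) (j+1) * (j+1)^e
      = stirS m j * (j+1)^e + stirS m (j+1) * (j+1)^(e+1) := by
    intro j
    show (stirS m j + (j+1) * stirS m (j+1)) * (j+1)^e = _
    ring
  simp only [hterm, Finset.sum_add_distrib]
  congr 1
  rw [Finset.sum_range_succ' (fun j => stirS m j * j^(e+1))]
  rw [Finset.sum_range_succ (fun j => stirS m (j+1) * (j+1)^(e+1))]
  rw [stirS_eq_zero (Nat.lt_succ_self m), Nat.zero_mul, Nat.add_zero]
  rw [Nat.zero_pow (Nat.succ_pos e), Nat.mul_zero, Nat.add_zero]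
  simp

lemma step3 (n m : ℕ) (g : ℕ → ℕ) :
    ∑ r ∈ Finset.range (n+2), (n+1).choose r * Bell r * g (n+1-r)
    = (∑ r ∈ Finset.range (n+1), n.choose r * Bell r * g (n+1-r))
      + ∑ r ∈ Finset.range (n+1), n.choose r * Bell (r+1) * g (n-r) := by
  rw [Finset.sum_range_succ' (fun r => (n+1).choose r * Bell r * g (n+1-r))]
  have hterm : ∀ r, (n+1).choose (r+1) * Bell (r+1) * g (n+1-(r+1))
      = n.choose r * Bell (r+1) * g (n-r) + n.choose (r+1) * Bell (r+1) * g (n-r) := by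
    intro r
    rw [Nat.choose_succ_succ, Nat.succ_sub_succ, Nat.add_mul, Nat.add_mul]
  simp only [hterm, Finset.sum_add_distrib]
  have h2 : (∑ r ∈ Finset.range (n+1), n.choose (r+1) * Bell (r+1) * g (n-r))
      + (n+1).choose 0 * Bell 0 * g (n+1-0)
      = ∑ r ∈ Finset.range (n+1), n.choose r * Bell r * g (n+1-r) := by
    have : (n+1).choose 0 * Bell 0 * g (n+1-0) = n.choose 0 * Bell 0 * g (n+1-0) := by
      simp
    rw [this]
    have conv1 : ∑ r ∈ Finset.range (n+1), n.choose (r+1) * Bell (r+1) * g (n-r)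
        = ∑ r ∈ Finset.range (n+1), n.choose (r+1) * Bell (r+1) * g (n+1-(r+1)) :=
      Finset.sum_congr rfl fun r _ => by rw [Nat.succ_sub_succ]
    rw [conv1]
    rw [← Finset.sum_range_succ' (fun r => n.choose r * Bell r * g (n+1-r))]
    rw [Finset.sum_range_succ (fun r => n.choose r * Bell r * g (n+1-r))]
    rw [Nat.choose_succ_self, Nat.zero_mul, Nat.zero_mul, Nat.add_zero]
  omega

lemma key (n m : ℕ) :
    ∑ r ∈ Finset.range (n+1), ∑ j ∈ Finset.range (m+1+1),
        n.choose r * stirS (m+1) j * Bell r * j^(n-r)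
    = ∑ r ∈ Finset.range (n+1+1), ∑ j ∈ Finset.range (m+1),
        (n+1).choose r * stirS m j * Bell r * j^(n+1-r) := by
  have hfac : ∀ (c b : ℕ) (M : ℕ) (F : ℕ → ℕ) (e : ℕ),
      ∑ j ∈ Finset.range M, c * F j * b * j^e = c * b * ∑ j ∈ Finset.range M, F j * j^e := by
    intro c b M F e
    rw [Finset.mul_sum]
    exact Finset.sum_congr rfl fun j _ => by ring
  have lhs1 : ∑ r ∈ Finset.range (n+1), ∑ j ∈ Finset.range (m+1+1),
        n.choose r * stirS (m+1) j * Bell r * j^(n-r)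
      = (∑ r ∈ Finset.range (n+1), n.choose r * Bell r
          * ∑ j ∈ Finset.range (m+1), stirS m j * (j+1)^(n-r))
        + ∑ r ∈ Finset.range (n+1), n.choose r * Bell r
          * ∑ j ∈ Finset.range (m+1), stirS m j * j^(n-r+1) := by
    rw [← Finset.sum_add_distrib]
    refine Finset.sum_congr rfl fun r hr => ?_
    rw [hfac, inner1, Nat.mul_add]
  have rhs1 : ∑ r ∈ Finset.range (n+1+1), ∑ j ∈ Finset.range (m+1),
        (n+1).choose r * stirS m j * Bell r * j^(n+1-r)
      = ∑ r ∈ Finset.range (n+2), (n+1).choose r * Bell r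
          * ∑ j ∈ Finset.range (m+1), stirS m j * j^(n+1-r) :=
    Finset.sum_congr rfl fun r _ => hfac _ _ _ _ _
  rw [lhs1, rhs1, step3 n m (fun e => ∑ j ∈ Finset.range (m+1), stirS m j * j^e),
    Nat.add_comm (∑ r ∈ Finset.range (n+1), n.choose r * Bell r
          * ∑ j ∈ Finset.range (m+1), stirS m j * (j+1)^(n-r))]
  congr 1
  · refine Finset.sum_congr rfl fun r hr => ?_
    have h' : n - r + 1 = n + 1 - r := by
      have := Finset.mem_range.mp hr; omega
    rw [h']
  · -- uses keyK
    have swap : ∀ (G : ℕ → ℕ → ℕ),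
        ∑ r ∈ Finset.range (n+1), ∑ j ∈ Finset.range (m+1), stirS m j * G r j
        = ∑ j ∈ Finset.range (m+1), stirS m j * ∑ r ∈ Finset.range (n+1), G r j := by
      intro G
      rw [Finset.sum_comm]
      exact Finset.sum_congr rfl fun j _ => by rw [Finset.mul_sum]
    have e1 : ∑ r ∈ Finset.range (n+1), n.choose r * Bell r
          * ∑ j ∈ Finset.range (m+1), stirS m j * (j+1)^(n-r)
        = ∑ r ∈ Finset.range (n+1), ∑ j ∈ Finset.range (m+1),
            stirS m j * (n.choose r * Bell r * (j+1)^(n-r)) := by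
      refine Finset.sum_congr rfl fun r _ => ?_
      rw [Finset.mul_sum]
      exact Finset.sum_congr rfl fun j _ => by ring
    have e2 : ∑ r ∈ Finset.range (n+1), n.choose r * Bell (r+1)
          * ∑ j ∈ Finset.range (m+1), stirS m j * j^(n-r)
        = ∑ r ∈ Finset.range (n+1), ∑ j ∈ Finset.range (m+1),
            stirS m j * (n.choose r * Bell (r+1) * j^(n-r)) := by
      refine Finset.sum_congr rfl fun r _ => ?_
      rw [Finset.mul_sum]
      exact Finset.sum_congr rfl fun j _ => by ring
    rw [e1, e2, swap, swap]
    refine Finset.sum_congr rfl fun j _ => ?_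
    rw [keyK n j]

theorem stmt_19 (n m : ℕ) :
    Bell (n + m) =
      ∑ r ∈ Finset.range (n + 1), ∑ j ∈ Finset.range (m + 1),
        Nat.choose n r * stirS m j * Bell r * j ^ (n - r) := by
  induction n generalizing m with
  | zero =>
    rw [Finset.sum_range_one]
    simp only [Nat.choose_self, Nat.sub_zero, Nat.zero_add, pow_zero, Nat.mul_one,
      Nat.one_mul]
    have hB0 : Bell 0 = 1 := rfl
    rw [show Bell 0 = 1 from rfl]
    simp [Bell]
  | succ n ih =>
    rw [show n + 1 + m = n + (m + 1) by omega, ih (m+1), key n m]
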